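/- Consider partial functions with the pointwise refinement order, and let (L, R) be an oplax weak factorisation system on partial functions: L and R are classes of partial functions (predicates on f : α →. β for all types α, β) such that L = {f | f is oplaxly weakly orthogonal to every g ∈ R}, R = {g | every f ∈ L is oplaxly weakly orthogonal to g}, and every partial function f admits a factorisation f = r.comp l with l ∈ L and r ∈ R. Then every total partial function f : α →. β admits an (L, R)-factorisation f = r'.comp l' in which both l' ∈ L and r' ∈ R are total. -/

import Mathlib

universe u

/-- `f ≤ g` pointwise: every value of `f a` is a value of `g a`. -/
def PFunLE {α β : Type u} (f g : α →. β) : Prop := ∀ a, f a ≤ g a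

/-- `f` is total: defined everywhere. -/
def PFun.Total {α β : Type u} (f : α →. β) : Prop := ∀ a, (f a).Dom

/-- `f` is injective on its domain. -/
def PFun.InjOnDom {α β : Type u} (f : α →. β) : Prop :=
  ∀ ⦃a a' : α⦄ ⦃b : β⦄, b ∈ f a → b ∈ f a' → a = a'

/-- `f` is oplaxly weakly orthogonal to `g`: every oplax square `(u, v) : f → g`
(`v.comp f ≤ g.comp u`) admits an oplax diagonal. -/
def PFun.OplaxOrthP {α β γ δ : Type u} (f : α →. β) (g : γ →. δ) : Prop :=
  ∀ (u : α →. γ) (v : β →. δ), PFunLE (v.comp f) (g.comp u) →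
    ∃ d : β →. γ, PFunLE (d.comp f) u ∧ PFunLE v (g.comp d)

theorem pfun_mem_comp_iff {α β γ : Type u} (f : β →. γ) (g : α →. β) (a : α) (c : γ) :
    c ∈ f.comp g a ↔ ∃ b ∈ g a, c ∈ f b := Part.mem_bind_iff

/-- For an oplax weak factorisation system `(L, R)` on partial functions, every total
partial function admits an `(L, R)`-factorisation by total maps. -/
theorem stmt19
    (L R : ∀ {α β : Type u}, (α →. β) → Prop)
    (hL : ∀ {α β : Type u} (f : α →. β),
      L f ↔ ∀ {γ δ : Type u} (g : γ →. δ), R g → PFun.OplaxOrthP f g)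
    (hR : ∀ {γ δ : Type u} (g : γ →. δ),
      R g ↔ ∀ {α β : Type u} (f : α →. β), L f → PFun.OplaxOrthP f g)
    (hfact : ∀ {α β : Type u} (f : α →. β),
      ∃ (κ : Type u) (l : α →. κ) (r : κ →. β), f = r.comp l ∧ L l ∧ R r)
    {α β : Type u} (f : α →. β) (hf : PFun.Total f) :
    ∃ (κ : Type u) (l : α →. κ) (r : κ →. β),
      f = r.comp l ∧ L l ∧ R r ∧ PFun.Total l ∧ PFun.Total r := by
  obtain ⟨κ, l, r, hfl, hLl, hRr⟩ := hfact f
  -- the projection onto the subtype of points where `r` is defined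
  set p : κ →. {k : κ // (r k).Dom} := fun k => ⟨(r k).Dom, fun h => ⟨k, h⟩⟩ with hp
  set i : {k : κ // (r k).Dom} →. κ := fun k' => Part.some k'.val with hi
  have hmem_p : ∀ (k : κ) (c : {k : κ // (r k).Dom}), c ∈ p k ↔ c.val = k := by
    intro k c
    constructor
    · rintro ⟨h, rfl⟩; rfl
    · rintro rfl; exact ⟨c.2, rfl⟩
  have hmem_i : ∀ (c : {k : κ // (r k).Dom}) (k : κ), k ∈ i c ↔ k = c.val := by
    intro c k; simp [hi, eq_comm, Part.mem_some_iff]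
  -- every point of `α` has a value under `l` at which `r` is defined
  have hdom : ∀ a : α, ∃ k, k ∈ l a ∧ (r k).Dom := by
    intro a
    obtain ⟨b, hb⟩ := Part.dom_iff_mem.mp (hf a)
    rw [hfl, pfun_mem_comp_iff] at hb
    obtain ⟨k, hk, hbk⟩ := hb
    exact ⟨k, hk, Part.dom_iff_mem.mpr ⟨b, hbk⟩⟩
  refine ⟨{k : κ // (r k).Dom}, p.comp l, r.comp i, ?_, ?_, ?_, ?_, ?_⟩
  · -- the factorisation equation
    funext a
    apply Part.ext
    intro b
    rw [hfl]
    simp only [pfun_mem_comp_iff]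
    constructor
    · rintro ⟨k, hk, hbk⟩
      have h : (r k).Dom := Part.dom_iff_mem.mpr ⟨b, hbk⟩
      refine ⟨⟨k, h⟩, ⟨k, hk, (hmem_p k ⟨k, h⟩).mpr rfl⟩, ?_⟩
      exact ⟨k, (hmem_i ⟨k, h⟩ k).mpr rfl, hbk⟩
    · rintro ⟨c, ⟨k, hk, hc⟩, k', hk', hbk'⟩
      rw [hmem_p] at hc
      rw [hmem_i] at hk'
      exact ⟨k, hk, by rw [← hc, ← hk']; exact hbk'⟩
  · -- `p.comp l ∈ L`
    rw [hL]
    intro γ δ g hg u v hsq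
    have horth : PFun.OplaxOrthP l g := (hL l).mp hLl g hg
    have hsq' : PFunLE ((v.comp p).comp l) (g.comp u) := by
      intro a e he
      apply hsq a
      simp only [pfun_mem_comp_iff] at he ⊢
      obtain ⟨k, hk, c, hc, hec⟩ := he
      exact ⟨c, ⟨k, hk, hc⟩, hec⟩
    obtain ⟨d, hd1, hd2⟩ := horth u (v.comp p) hsq'
    refine ⟨d.comp i, ?_, ?_⟩
    · intro a c hc
      simp only [pfun_mem_comp_iff] at hc
      obtain ⟨c', ⟨k, hk, hc'⟩, k', hk', hck'⟩ := hc
      rw [hmem_p] at hc'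
      rw [hmem_i] at hk'
      apply hd1 a
      simp only [pfun_mem_comp_iff]
      exact ⟨k, hk, by rw [← hc', ← hk']; exact hck'⟩
    · intro c e he
      have hvp : e ∈ (v.comp p) c.val := by
        simp only [pfun_mem_comp_iff]
        exact ⟨c, (hmem_p c.val c).mpr rfl, he⟩
      have := hd2 c.val e hvp
      simp only [pfun_mem_comp_iff] at this ⊢
      obtain ⟨x, hx, hex⟩ := this
      exact ⟨x, ⟨c.val, (hmem_i c c.val).mpr rfl, hx⟩, hex⟩
  · -- `r.comp i ∈ R`
    rw [hR]
    intro α' β' f' hLf' u v hsq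
    have horth : PFun.OplaxOrthP f' r := (hR r).mp hRr f' hLf'
    have hsq' : PFunLE (v.comp f') (r.comp (i.comp u)) := by
      intro a b hb
      have := hsq a b hb
      simp only [pfun_mem_comp_iff] at this ⊢
      obtain ⟨c, hc, k, hk, hbk⟩ := this
      exact ⟨k, ⟨c, hc, hk⟩, hbk⟩
    obtain ⟨d, hd1, hd2⟩ := horth (i.comp u) v hsq'
    refine ⟨p.comp d, ?_, ?_⟩
    · intro a c hc
      simp only [pfun_mem_comp_iff] at hc
      obtain ⟨b, hb, k, hk, hck⟩ := hc
      rw [hmem_p] at hck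
      have hk' : k ∈ (d.comp f') a := by
        simp only [pfun_mem_comp_iff]; exact ⟨b, hb, hk⟩
      have := hd1 a k hk'
      simp only [pfun_mem_comp_iff] at this
      obtain ⟨c', hc', hkc'⟩ := this
      rw [hmem_i] at hkc'
      have : c = c' := Subtype.ext (by rw [hck, hkc'])
      rwa [this]
    · intro b e he
      have := hd2 b e he
      simp only [pfun_mem_comp_iff] at this ⊢
      obtain ⟨k, hk, hek⟩ := this
      have h : (r k).Dom := Part.dom_iff_mem.mpr ⟨e, hek⟩
      exact ⟨⟨k, h⟩, ⟨k, hk, (hmem_p k ⟨k, h⟩).mpr rfl⟩, k, (hmem_i ⟨k, h⟩ k).mpr rfl, hek⟩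
  · -- totality of `p.comp l`
    intro a
    obtain ⟨k, hk, h⟩ := hdom a
    apply Part.dom_iff_mem.mpr
    refine ⟨⟨k, h⟩, ?_⟩
    simp only [pfun_mem_comp_iff]
    exact ⟨k, hk, (hmem_p k ⟨k, h⟩).mpr rfl⟩
  · -- totality of `r.comp i`
    intro c
    apply Part.dom_iff_mem.mpr
    obtain ⟨b, hb⟩ := Part.dom_iff_mem.mp c.2
    refine ⟨b, ?_⟩
    simp only [pfun_mem_comp_iff]
    exact ⟨c.val, (hmem_i c c.val).mpr rfl, hb⟩
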